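/- Let V be a real Hilbert space, let N, m be positive integers, let A be an m×N real matrix, and u ∈ V^m. A point x ∈ V^N minimizes F(z) := ‖z‖_{V,1} + (1/2)‖Az − u‖²_{V,2} over V^N if and only if, writing g := A*(u − Ax) ∈ V^N, for every index j ∈ {1,…,N}: if x_j ≠ 0 then g_j = x_j/‖x_j‖_V, and if x_j = 0 then ‖g_j‖_V ≤ 1. -/

import Mathlib

open scoped BigOperators
open Filter

variable {V : Type*}

noncomputable def mnorm1 [NormedAddCommGroup V] {N : ℕ} (z : Fin N → V) : ℝ := ∑ j, ‖z j‖

noncomputable def mnorm2 [NormedAddCommGroup V] {N : ℕ} (z : Fin N → V) : ℝ :=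
  Real.sqrt (∑ j, ‖z j‖ ^ 2)

def matVec [NormedAddCommGroup V] [Module ℝ V] {m N : ℕ}
    (A : Matrix (Fin m) (Fin N) ℝ) (z : Fin N → V) : Fin m → V :=
  fun i => ∑ j, A i j • z j

def matVecT [NormedAddCommGroup V] [Module ℝ V] {m N : ℕ}
    (A : Matrix (Fin m) (Fin N) ℝ) (v : Fin m → V) : Fin N → V :=
  fun j => ∑ i, A i j • v i

def IsSparse [Zero V] {N : ℕ} (s : ℕ) (z : Fin N → V) : Prop :=
  ∃ S : Finset (Fin N), S.card ≤ s ∧ ∀ j ∉ S, z j = 0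

def restrict [Zero V] {N : ℕ} (S : Finset (Fin N)) (z : Fin N → V) : Fin N → V :=
  fun j => if j ∈ S then z j else 0

noncomputable def softThresh [NormedAddCommGroup V] [Module ℝ V] (τ : ℝ) (x : V) : V :=
  (max (‖x‖ - τ) 0 / ‖x‖) • x

noncomputable def Sop [NormedAddCommGroup V] [Module ℝ V] {m N : ℕ}
    (τ : ℝ) (A : Matrix (Fin m) (Fin N) ℝ) (u : Fin m → V) (z : Fin N → V) : Fin N → V :=
  fun j => softThresh τ ((z - τ • matVecT A (matVec A z - u)) j)

noncomputable def specNorm {N : ℕ} (M : Matrix (Fin N) (Fin N) ℝ) : ℝ :=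
  ‖(Matrix.toEuclideanCLM (𝕜 := ℝ) M : EuclideanSpace ℝ (Fin N) →L[ℝ] EuclideanSpace ℝ (Fin N))‖

section Aux
variable [NormedAddCommGroup V] [InnerProductSpace ℝ V]

noncomputable def rin (a b : V) : ℝ := inner ℝ a b

lemma mnorm2_sq' {N : ℕ} (w : Fin N → V) : mnorm2 w ^ 2 = ∑ i, ‖w i‖ ^ 2 :=
  Real.sq_sqrt (Finset.sum_nonneg fun i _ => sq_nonneg _)

lemma adj_sum {m N : ℕ} (A : Matrix (Fin m) (Fin N) ℝ) (d : Fin N → V) (v : Fin m → V) :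
    ∑ i, rin (matVec A d i) (v i) = ∑ j, rin (d j) (matVecT A v j) := by
  simp only [matVec, matVecT, rin, sum_inner, inner_sum, real_inner_smul_left,
    real_inner_smul_right]
  rw [Finset.sum_comm]

lemma Fdiff {m N : ℕ} (A : Matrix (Fin m) (Fin N) ℝ) (u : Fin m → V) (x z : Fin N → V) :
    (mnorm1 z + (1 / 2) * mnorm2 (matVec A z - u) ^ 2) -
      (mnorm1 x + (1 / 2) * mnorm2 (matVec A x - u) ^ 2) =
    (∑ j, (‖z j‖ - ‖x j‖ - rin (matVecT A (u - matVec A x) j) (z j - x j)))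
      + (1 / 2) * ∑ i, ‖matVec A (z - x) i‖ ^ 2 := by
  have hsplit : ∀ i, (matVec A z - u) i = (matVec A x - u) i + matVec A (z - x) i := by
    intro i
    simp only [Pi.sub_apply, matVec, smul_sub, Finset.sum_sub_distrib]
    abel
  have hgsign : ∀ j, matVecT A (u - matVec A x) j = -(matVecT A (matVec A x - u) j) := by
    intro j
    simp only [matVecT, Pi.sub_apply, smul_sub, Finset.sum_sub_distrib, neg_sub]
  have hQ : ∑ i, ‖(matVec A z - u) i‖ ^ 2 =
      ∑ i, ‖(matVec A x - u) i‖ ^ 2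
        - 2 * ∑ j, rin (matVecT A (u - matVec A x) j) (z j - x j)
        + ∑ i, ‖matVec A (z - x) i‖ ^ 2 := by
    have e1 : ∑ i, ‖(matVec A z - u) i‖ ^ 2 =
        ∑ i, (‖(matVec A x - u) i‖ ^ 2
            + 2 * rin ((matVec A x - u) i) (matVec A (z - x) i)
            + ‖matVec A (z - x) i‖ ^ 2) := by
      refine Finset.sum_congr rfl fun i _ => ?_
      rw [hsplit i]
      exact norm_add_sq_real _ _
    have e2 : ∑ i, rin ((matVec A x - u) i) (matVec A (z - x) i)
        = ∑ j, rin ((z - x) j) (matVecT A (matVec A x - u) j) := by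
      rw [← adj_sum]
      exact Finset.sum_congr rfl fun i _ => real_inner_comm _ _
    have e3 : ∑ j, rin ((z - x) j) (matVecT A (matVec A x - u) j)
        = -∑ j, rin (matVecT A (u - matVec A x) j) (z j - x j) := by
      rw [← Finset.sum_neg_distrib]
      refine Finset.sum_congr rfl fun j _ => ?_
      rw [hgsign j]
      simp [rin, real_inner_comm]
    rw [e1, Finset.sum_add_distrib, Finset.sum_add_distrib, ← Finset.mul_sum, e2, e3]
    ring
  simp only [mnorm1, mnorm2_sq']
  rw [hQ, Finset.sum_sub_distrib, Finset.sum_sub_distrib]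
  ring

end Aux

/-- optimality conditions: `x` minimizes
`F(z) = ‖z‖_{V,1} + (1/2)‖Az − u‖²_{V,2}` iff, with `g = A*(u − Ax)`, for every `j`:
`g_j = x_j/‖x_j‖` whenever `x_j ≠ 0`, and `‖g_j‖ ≤ 1` whenever `x_j = 0`. -/


theorem minimizer_iff_optimality_conditions
    [NormedAddCommGroup V] [InnerProductSpace ℝ V] [CompleteSpace V]
    {N m : ℕ} (hN : 0 < N) (hm : 0 < m)
    (A : Matrix (Fin m) (Fin N) ℝ) (u : Fin m → V) (x : Fin N → V) :
    (∀ z : Fin N → V,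
        mnorm1 x + (1 / 2) * mnorm2 (matVec A x - u) ^ 2 ≤
          mnorm1 z + (1 / 2) * mnorm2 (matVec A z - u) ^ 2) ↔
      ∀ j : Fin N,
        (x j ≠ 0 → matVecT A (u - matVec A x) j = ‖x j‖⁻¹ • x j) ∧
          (x j = 0 → ‖matVecT A (u - matVec A x) j‖ ≤ 1) := by
  set g := matVecT A (u - matVec A x) with hgdef
  constructor
  · -- forward direction
    intro hmin j
    -- per-coordinate variational inequality
    have key : ∀ w : V, 0 ≤ ‖w‖ - ‖x j‖ - rin (g j) (w - x j)
        + (1 / 2) * ((∑ i, (A i j) ^ 2) * ‖w - x j‖ ^ 2) := by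
      intro w
      have h := hmin (Function.update x j w)
      have h2 := Fdiff A u x (Function.update x j w)
      have hsum1 : ∑ j', (‖Function.update x j w j'‖ - ‖x j'‖
          - rin (g j') (Function.update x j w j' - x j'))
          = ‖w‖ - ‖x j‖ - rin (g j) (w - x j) := by
        rw [Finset.sum_eq_single j]
        · simp
        · intro b _ hb
          simp [Function.update_of_ne hb, rin]
        · simp
      have hsum2 : ∑ i, ‖matVec A (Function.update x j w - x) i‖ ^ 2
          = (∑ i, (A i j) ^ 2) * ‖w - x j‖ ^ 2 := by
        rw [Finset.sum_mul]
        refine Finset.sum_congr rfl fun i _ => ?_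
        have e : matVec A (Function.update x j w - x) i = A i j • (w - x j) := by
          unfold matVec
          rw [Finset.sum_eq_single j]
          · simp
          · intro b _ hb
            simp [Function.update_of_ne hb]
          · simp
        rw [e, norm_smul, mul_pow, Real.norm_eq_abs, sq_abs]
      rw [← hgdef, hsum1, hsum2] at h2
      linarith
    -- subgradient inequality
    have subg : ∀ h : V, rin (g j) h ≤ ‖x j + h‖ - ‖x j‖ := by
      intro h
      by_contra hcon
      push_neg at hcon
      set c := ∑ i, (A i j) ^ 2 with hc
      have hc0 : 0 ≤ c := Finset.sum_nonneg fun i _ => sq_nonneg _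
      set D := rin (g j) h - (‖x j + h‖ - ‖x j‖) with hD
      have hD0 : 0 < D := by simp only [hD]; linarith
      have hden : 0 < c * ‖h‖ ^ 2 + 1 := by positivity
      set t : ℝ := min 1 (D / (c * ‖h‖ ^ 2 + 1)) with ht
      have ht0 : 0 < t := lt_min one_pos (div_pos hD0 hden)
      have ht1 : t ≤ 1 := min_le_left _ _
      have htD : t * (c * ‖h‖ ^ 2 + 1) ≤ D := by
        have h1 : t ≤ D / (c * ‖h‖ ^ 2 + 1) := min_le_right _ _
        calc t * (c * ‖h‖ ^ 2 + 1) ≤ (D / (c * ‖h‖ ^ 2 + 1)) * (c * ‖h‖ ^ 2 + 1) := by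
              exact mul_le_mul_of_nonneg_right h1 hden.le
          _ = D := div_mul_cancel₀ _ hden.ne'
      have hk := key (x j + t • h)
      simp only [add_sub_cancel_left] at hk
      have e2 : rin (g j) (t • h) = t * rin (g j) h := by
        simp [rin, real_inner_smul_right]
      have e3 : ‖t • h‖ ^ 2 = t ^ 2 * ‖h‖ ^ 2 := by
        rw [norm_smul, mul_pow, Real.norm_eq_abs, sq_abs]
      rw [e2, e3] at hk
      have hconv : ‖x j + t • h‖ ≤ (1 - t) * ‖x j‖ + t * ‖x j + h‖ := by
        have e : x j + t • h = (1 - t) • x j + t • (x j + h) := by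
          rw [sub_smul, one_smul, smul_add]; abel
        rw [e]
        calc ‖(1 - t) • x j + t • (x j + h)‖ ≤ ‖(1 - t) • x j‖ + ‖t • (x j + h)‖ :=
              norm_add_le _ _
          _ = (1 - t) * ‖x j‖ + t * ‖x j + h‖ := by
              rw [norm_smul, norm_smul, Real.norm_eq_abs, Real.norm_eq_abs,
                abs_of_nonneg (by linarith), abs_of_nonneg ht0.le]
      nlinarith [mul_le_mul_of_nonneg_left htD ht0.le, mul_pos ht0 ht0,
        mul_pos ht0 hD0]
    have hg2 : ‖g j‖ ^ 2 ≤ ‖g j‖ := by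
      have h1 := subg (g j)
      have h2 : ‖x j + g j‖ ≤ ‖x j‖ + ‖g j‖ := norm_add_le _ _
      have h3 : rin (g j) (g j) = ‖g j‖ ^ 2 := real_inner_self_eq_norm_sq _
      linarith
    have hgle1 : ‖g j‖ ≤ 1 := by nlinarith [norm_nonneg (g j)]
    refine ⟨fun hne => ?_, fun _ => hgle1⟩
    have hn : 0 < ‖x j‖ := norm_pos_iff.2 hne
    have h1 : ‖x j‖ ≤ rin (g j) (x j) := by
      have := subg (-(x j))
      simp only [add_neg_cancel, norm_zero, zero_sub] at this
      have e : rin (g j) (-(x j)) = -rin (g j) (x j) := by simp [rin]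
      linarith [e ▸ this]
    have h2 : rin (g j) (x j) ≤ ‖g j‖ * ‖x j‖ := real_inner_le_norm _ _
    have hge1 : 1 ≤ ‖g j‖ := by nlinarith
    have hg1 : ‖g j‖ = 1 := le_antisymm hgle1 hge1
    have hgx : rin (g j) (x j) = ‖x j‖ := by nlinarith
    have hzero : ‖g j - ‖x j‖⁻¹ • x j‖ ^ 2 = 0 := by
      have e1 : ‖(‖x j‖⁻¹ : ℝ) • x j‖ = 1 := by
        rw [norm_smul, Real.norm_eq_abs, abs_of_pos (inv_pos.2 hn), inv_mul_cancel₀ hn.ne']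
      have e2 : (inner ℝ (g j) ((‖x j‖⁻¹ : ℝ) • x j) : ℝ) = 1 := by
        rw [real_inner_smul_right]
        have : (inner ℝ (g j) (x j) : ℝ) = ‖x j‖ := hgx
        rw [this, inv_mul_cancel₀ hn.ne']
      rw [norm_sub_sq_real, e1, e2, hg1]
      ring
    have := norm_eq_zero.1 (pow_eq_zero_iff (n := 2) (by norm_num) |>.1 hzero)
    exact sub_eq_zero.1 this
  · -- backward direction
    intro hopt z
    have hd := Fdiff A u x z
    rw [← hgdef] at hd
    have hterm : ∀ j, 0 ≤ ‖z j‖ - ‖x j‖ - rin (g j) (z j - x j) := by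
      intro j
      by_cases hx : x j = 0
      · have hb := (hopt j).2 hx
        have hcs : rin (g j) (z j) ≤ ‖g j‖ * ‖z j‖ := real_inner_le_norm _ _
        simp only [hx, norm_zero, sub_zero]
        nlinarith [norm_nonneg (z j)]
      · have hb := (hopt j).1 hx
        have hn : 0 < ‖x j‖ := norm_pos_iff.2 hx
        have e : rin (g j) (z j - x j) = ‖x j‖⁻¹ * rin (x j) (z j) - ‖x j‖ := by
          rw [hb]
          simp only [rin, real_inner_smul_left, inner_sub_right, real_inner_self_eq_norm_sq]
          field_simp
        have hcs : rin (x j) (z j) ≤ ‖x j‖ * ‖z j‖ := real_inner_le_norm _ _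
        have hbd : ‖x j‖⁻¹ * rin (x j) (z j) ≤ ‖z j‖ := by
          calc ‖x j‖⁻¹ * rin (x j) (z j) ≤ ‖x j‖⁻¹ * (‖x j‖ * ‖z j‖) :=
                mul_le_mul_of_nonneg_left hcs (inv_nonneg.2 hn.le)
            _ = ‖z j‖ := by field_simp
        rw [e]
        linarith
    have h1 : 0 ≤ ∑ j, (‖z j‖ - ‖x j‖ - rin (g j) (z j - x j)) :=
      Finset.sum_nonneg fun j _ => hterm j
    have h2 : 0 ≤ ∑ i, ‖matVec A (z - x) i‖ ^ 2 :=
      Finset.sum_nonneg fun i _ => sq_nonneg _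
    linarith
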